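/- In a Markov decision process with nonempty state space S, nonempty action space A, transition kernel P : S → A → PMF(S), goal-conditioned reward R : S → ℝ with R(s) ∈ {0,1} for all s, and discount factor γ with 0 < γ < 1, suppose V : S → ℝ satisfies 0 ≤ V(s) ≤ 1 for all s and the goal-conditioned Bellman optimality equation. If s̃ is a state with R(s̃) = 0 and some s' ∈ T(s̃) satisfies V(s') > 0, then there exists s' ∈ T(s̃) with s' ≠ s̃ and V(s') > V(s̃). -/

import Mathlib

/-- In an MDP with transition kernel `P : S → A → PMF S`, goal-conditioned reward
`R` taking values in `{0,1}`, discount `0 < γ < 1`, and `V` with `0 ≤ V ≤ 1`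
satisfying the goal-conditioned Bellman optimality equation: if `R s̃ = 0` and
some one-step reachable state has positive value, then there is a one-step
reachable state `s' ≠ s̃` with `V s' > V s̃`. -/
theorem exists_reachable_strictly_better
    {S A : Type*} [Nonempty S] [Nonempty A]
    (P : S → A → PMF S) (R : S → ℝ) (hR : ∀ s, R s = 0 ∨ R s = 1)
    (γ : ℝ) (hγ0 : 0 < γ) (hγ1 : γ < 1)
    (V : S → ℝ) (hV0 : ∀ s, 0 ≤ V s) (hV1 : ∀ s, V s ≤ 1)
    (hBellman : ∀ s, V s =
      R s + γ * (1 - R s) * ⨆ a : A, ∑' s', ((P s a) s').toReal * V s')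
    (sTilde : S) (hRs : R sTilde = 0)
    (hpos : ∃ s', (∃ a : A, 0 < (P sTilde a) s') ∧ 0 < V s') :
    ∃ s', (∃ a : A, 0 < (P sTilde a) s') ∧ s' ≠ sTilde ∧ V sTilde < V s' := by
  by_contra hcon
  push_neg at hcon
  -- all one-step reachable states have value ≤ V sTilde
  have hle : ∀ s', (∃ a : A, 0 < (P sTilde a) s') → V s' ≤ V sTilde := by
    intro s' hreach
    by_cases h : s' = sTilde
    · simp [h]
    · exact hcon s' hreach h
  have hPsum : ∀ a : A, Summable (fun s' => ((P sTilde a) s').toReal) := by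
    intro a
    exact ENNReal.summable_toReal (by simp [PMF.tsum_coe])
  have hPtsum : ∀ a : A, ∑' s', ((P sTilde a) s').toReal = 1 := by
    intro a
    rw [← ENNReal.tsum_toReal_eq (fun s' => PMF.apply_ne_top _ _), PMF.tsum_coe]
    simp
  have hsum : ∀ a : A, Summable (fun s' => ((P sTilde a) s').toReal * V s') := by
    intro a
    refine Summable.of_nonneg_of_le (fun s' => mul_nonneg ENNReal.toReal_nonneg (hV0 s'))
      (fun s' => ?_) (hPsum a)
    calc ((P sTilde a) s').toReal * V s' ≤ ((P sTilde a) s').toReal * 1 :=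
          mul_le_mul_of_nonneg_left (hV1 s') ENNReal.toReal_nonneg
      _ = ((P sTilde a) s').toReal := mul_one _
  -- each action value is ≤ V sTilde
  have hact : ∀ a : A, (∑' s', ((P sTilde a) s').toReal * V s') ≤ V sTilde := by
    intro a
    have hVt0 : 0 ≤ V sTilde := hV0 sTilde
    calc (∑' s', ((P sTilde a) s').toReal * V s')
        ≤ ∑' s', ((P sTilde a) s').toReal * V sTilde := by
          refine Summable.tsum_le_tsum (fun s' => ?_) (hsum a) ((hPsum a).mul_right _)
          rcases eq_or_lt_of_le (zero_le (a := (P sTilde a) s')) with h0 | h0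
          · simp [← h0]
          · exact mul_le_mul_of_nonneg_left (hle s' ⟨a, h0⟩) ENNReal.toReal_nonneg
      _ = (∑' s', ((P sTilde a) s').toReal) * V sTilde := tsum_mul_right
      _ = V sTilde := by rw [hPtsum a, one_mul]
  have hbdd : BddAbove (Set.range fun a : A => ∑' s', ((P sTilde a) s').toReal * V s') :=
    ⟨V sTilde, by rintro x ⟨a, rfl⟩; exact hact a⟩
  have hsup_le : (⨆ a : A, ∑' s', ((P sTilde a) s').toReal * V s') ≤ V sTilde :=
    ciSup_le hact
  have hB := hBellman sTilde
  rw [hRs] at hB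
  simp only [sub_zero, mul_one, zero_add] at hB
  -- V sTilde ≤ γ * V sTilde ⇒ V sTilde = 0
  have hVt0 : V sTilde = 0 := by
    have h1 : V sTilde ≤ γ * V sTilde := by
      have := mul_le_mul_of_nonneg_left hsup_le hγ0.le
      rw [← hB] at this
      exact this
    nlinarith [hV0 sTilde]
  have hsup0 : (⨆ a : A, ∑' s', ((P sTilde a) s').toReal * V s') = 0 := by
    have := hB
    rw [hVt0] at this
    have := this.symm
    rcases mul_eq_zero.mp this with h | h
    · exact absurd h hγ0.ne'
    · exact h
  obtain ⟨s₀, ⟨a₀, ha₀⟩, hV₀⟩ := hpos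
  have hterm : ((P sTilde a₀) s₀).toReal * V s₀ ≤
      ∑' s', ((P sTilde a₀) s').toReal * V s' :=
    Summable.le_tsum (hsum a₀) s₀
      (fun s' _ => mul_nonneg ENNReal.toReal_nonneg (hV0 s'))
  have hle_sup : (∑' s', ((P sTilde a₀) s').toReal * V s') ≤ 0 := by
    rw [← hsup0]; exact le_ciSup hbdd a₀
  have hpos' : 0 < ((P sTilde a₀) s₀).toReal * V s₀ :=
    mul_pos (ENNReal.toReal_pos ha₀.ne' (PMF.apply_ne_top _ _)) hV₀
  linarith
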